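/- Lower bound for distances in the CVS quadrangulation: with (q, v_*) obtained from a labeled tree (τ, ℓ) by the CVS bijection, for any two vertices u, v of q distinct from v_*, one has d_q(u, v) ≥ ℓ(u) + ℓ(v) − 2·min_{w ∈ [[u, v]]} ℓ(w), where [[u, v]] is the set of vertices on the unique geodesic path from u to v in the tree τ. -/

import Mathlib

open scoped Classical

def cvsSeg {α : Type} {G : SimpleGraph α} {c : ℕ → α}
    (hadj : ∀ i, G.Adj (c i) (c (i + 1))) (i : ℕ) : (d : ℕ) → G.Walk (c i) (c (i + d))
  | 0 => SimpleGraph.Walk.nil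
  | d + 1 => (cvsSeg hadj i d).concat (hadj (i + d))

lemma cvsSeg_support {α : Type} {G : SimpleGraph α} {c : ℕ → α}
    (hadj : ∀ i, G.Adj (c i) (c (i + 1))) (i : ℕ) :
    ∀ d, ∀ t ∈ (cvsSeg hadj i d).support, ∃ k, k ≤ d ∧ t = c (i + k) := by
  intro d
  induction d with
  | zero => intro t ht; simp [cvsSeg] at ht; exact ⟨0, le_rfl, ht⟩
  | succ d ih =>
    intro t ht
    rw [cvsSeg, SimpleGraph.Walk.support_concat] at ht
    rw [List.mem_append] at ht
    rcases ht with h | h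
    · obtain ⟨k, hk, rfl⟩ := ih t h
      exact ⟨k, Nat.le_succ_of_le hk, rfl⟩
    · exact ⟨d + 1, le_rfl, by simpa using h⟩

lemma cvsIVT (s : ℕ → ℤ) (hs : ∀ k, s k - 1 ≤ s (k + 1)) (A : ℤ) :
    ∀ d i, A ≤ s i → s (i + d) < A → ∃ k, i < k ∧ k ≤ i + d ∧ s k = A - 1 := by
  intro d
  induction d with
  | zero => intro i h1 h2; simp only [Nat.add_zero] at h2; omega
  | succ d ih =>
    intro i h1 h2
    by_cases h : s (i + 1) = A - 1
    · exact ⟨i + 1, by omega, by omega, h⟩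
    · have h3 : A ≤ s (i + 1) := by have := hs i; omega
      have h4 : s (i + 1 + d) < A := by
        have he : i + 1 + d = i + (d + 1) := by omega
        rwa [he]
      obtain ⟨k, hk1, hk2, hk3⟩ := ih (i + 1) h3 h4
      exact ⟨k, by omega, by omega, hk3⟩

lemma cvsTreeSep {α : Type} {G : SimpleGraph α} (hG : G.IsAcyclic) {u v : α}
    (p : G.Walk u v) (hp : p.IsPath) (W : G.Walk u v) : p.support ⊆ W.support := by
  have h := hG.path_unique ⟨p, hp⟩ ⟨W.bypass, W.bypass_isPath⟩
  rw [show p = W.bypass from congrArg Subtype.val h]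
  exact W.support_bypass_subset

/-- Lower bound for distances in the CVS quadrangulation. The plane tree `τ` is given as
a tree graph `G` on the vertex set `α`, with integer labels `ℓ` changing by at most `1`
along each tree edge, and with contour exploration `c` (a `2n`-periodic closed walk along
the edges of `G` visiting every vertex). The quadrangulation `q` (vertex set
`τ ∪ {v_*}`, encoded as `Option α`) joins each corner to its successor, the first later
corner in contour order with label one less (or to `v_*` if none exists). Then for any
vertices `u, v` of `τ`, and the unique injective path `p` from `u` to `v` in the tree,
`d_q(u, v) ≥ ℓ(u) + ℓ(v) - 2 min_{w ∈ [[u,v]]} ℓ(w)`. -/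
theorem cvs_distance_lower_bound
    {α : Type} [Fintype α] [DecidableEq α] [Nonempty α]
    (n : ℕ) (hn : 1 ≤ n) (G : SimpleGraph α) (hG : G.IsTree)
    (c : ℕ → α) (ℓ : α → ℤ)
    (hper : ∀ i, c (i + 2 * n) = c i)
    (hsurj : ∀ a : α, ∃ i < 2 * n, c i = a)
    (hadj : ∀ i, G.Adj (c i) (c (i + 1)))
    (hlab : ∀ a b, G.Adj a b → |ℓ a - ℓ b| ≤ 1)
    (Q : SimpleGraph (Option α))
    (hQ : Q = SimpleGraph.fromRel (fun x y => ∃ i : ℕ,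
      x = some (c i) ∧
      y = (if h : ∃ j, i < j ∧ ℓ (c j) = ℓ (c i) - 1
        then some (c (sInf {j | i < j ∧ ℓ (c j) = ℓ (c i) - 1}))
        else none))) :
    ∀ (u v : α) (p : G.Walk u v), p.IsPath →
      ℓ u + ℓ v - 2 * (p.support.toFinset.inf'
          ⟨u, List.mem_toFinset.mpr p.start_mem_support⟩ ℓ)
        ≤ (Q.dist (some u) (some v) : ℤ) := by
  intro u v p hp
  have huniv : (Finset.univ : Finset α).Nonempty := Finset.univ_nonempty
  set ms : ℤ := Finset.univ.inf' huniv ℓ with hms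
  have hms_le : ∀ a : α, ms ≤ ℓ a := fun a => Finset.inf'_le ℓ (Finset.mem_univ a)
  set ℓ' : Option α → ℤ := fun o => o.elim (ms - 1) ℓ with hℓ'
  have hℓ's : ∀ a : α, ℓ' (some a) = ℓ a := fun a => rfl
  have hstep : ∀ k, ℓ (c k) - 1 ≤ ℓ (c (k + 1)) := by
    intro k
    have := hlab _ _ (hadj k)
    rw [abs_le] at this
    omega
  -- corners with no successor carry the minimal label
  have key1 : ∀ i, ¬(∃ j, i < j ∧ ℓ (c j) = ℓ (c i) - 1) → ℓ (c i) = ms := by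
    intro i hni
    by_contra hne
    have hlt : ms < ℓ (c i) := lt_of_le_of_ne (hms_le _) (fun h => hne h.symm)
    obtain ⟨a0, _, ha0⟩ := Finset.exists_mem_eq_inf' huniv ℓ
    obtain ⟨i0, hi0, hci0⟩ := hsurj a0
    have hperK : ∀ K : ℕ, c (i0 + 2 * n * K) = c i0 := by
      intro K
      induction K with
      | zero => simp
      | succ K ih =>
        have he : i0 + 2 * n * (K + 1) = (i0 + 2 * n * K) + 2 * n := by ring
        rw [he, hper, ih]
    set t := i0 + 2 * n * (i + 1) with hts
    have hti : i < t := by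
      have h2 : i + 1 ≤ 2 * n * (i + 1) := Nat.le_mul_of_pos_left (i + 1) (by omega)
      omega
    have hlt' : ℓ (c t) < ℓ (c i) := by
      rw [hts, hperK, hci0, ← ha0]; exact hlt
    obtain ⟨k, hk1, hk2, hk3⟩ := cvsIVT (fun k => ℓ (c k)) hstep (ℓ (c i)) (t - i) i
      le_rfl (by rw [show i + (t - i) = t by omega]; exact hlt')
    exact hni ⟨k, hk1, hk3⟩
  -- labels along a contour segment up to the successor stay high
  have key_min : ∀ i, (∃ j, i < j ∧ ℓ (c j) = ℓ (c i) - 1) →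
      ∀ k, i ≤ k → k < sInf {j | i < j ∧ ℓ (c j) = ℓ (c i) - 1} → ℓ (c i) ≤ ℓ (c k) := by
    intro i hS
    have haux : ∀ d, i + d < sInf {j | i < j ∧ ℓ (c j) = ℓ (c i) - 1} →
        ℓ (c i) ≤ ℓ (c (i + d)) := by
      intro d
      induction d with
      | zero => intro _; simp
      | succ d ih =>
        intro hd
        have hd' : i + d < sInf {j | i < j ∧ ℓ (c j) = ℓ (c i) - 1} := by omega
        have h1 := ih hd'
        have h2 := hstep (i + d)
        by_cases h3 : ℓ (c (i + d + 1)) = ℓ (c i) - 1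
        · exfalso
          have hmem : (i + d + 1) ∈ {j | i < j ∧ ℓ (c j) = ℓ (c i) - 1} := ⟨by omega, h3⟩
          have := Nat.sInf_le hmem
          omega
        · have he : i + (d + 1) = i + d + 1 := by omega
          rw [he]
          omega
    intro k hik hk
    have he : k = i + (k - i) := by omega
    rw [he]
    exact haux _ (by omega)
  subst hQ
  -- adjacency in Q changes ℓ' by at most one
  have key2 : ∀ x y : Option α,
      (SimpleGraph.fromRel (fun x y => ∃ i : ℕ,
        x = some (c i) ∧
        y = (if h : ∃ j, i < j ∧ ℓ (c j) = ℓ (c i) - 1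
          then some (c (sInf {j | i < j ∧ ℓ (c j) = ℓ (c i) - 1}))
          else none))).Adj x y → |ℓ' x - ℓ' y| ≤ 1 := by
    have hrel : ∀ x y : Option α, (∃ i : ℕ,
        x = some (c i) ∧
        y = (if h : ∃ j, i < j ∧ ℓ (c j) = ℓ (c i) - 1
          then some (c (sInf {j | i < j ∧ ℓ (c j) = ℓ (c i) - 1}))
          else none)) → |ℓ' x - ℓ' y| ≤ 1 := by
      rintro x y ⟨i, rfl, rfl⟩
      by_cases h : ∃ j, i < j ∧ ℓ (c j) = ℓ (c i) - 1
      · rw [dif_pos h]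
        have h2 : ℓ (c (sInf {j | i < j ∧ ℓ (c j) = ℓ (c i) - 1})) = ℓ (c i) - 1 :=
          (Nat.sInf_mem h).2
        rw [hℓ's, hℓ's]
        rw [abs_le]
        omega
      · rw [dif_neg h]
        have h2 := key1 i h
        have : ℓ' (none : Option α) = ms - 1 := rfl
        rw [hℓ's, this, h2, abs_le]
        omega
    intro x y hxy
    rw [SimpleGraph.fromRel_adj] at hxy
    rcases hxy.2 with h | h
    · exact hrel x y h
    · rw [abs_sub_comm]; exact hrel y x h
  set Q : SimpleGraph (Option α) := SimpleGraph.fromRel (fun x y => ∃ i : ℕ,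
      x = some (c i) ∧
      y = (if h : ∃ j, i < j ∧ ℓ (c j) = ℓ (c i) - 1
        then some (c (sInf {j | i < j ∧ ℓ (c j) = ℓ (c i) - 1}))
        else none)) with hQdef
  -- walks in Q change ℓ' by at most length
  have key3 : ∀ (x y : Option α) (R : Q.Walk x y), |ℓ' x - ℓ' y| ≤ (R.length : ℤ) := by
    intro x y R
    induction R with
    | nil => simp
    | @cons x' y' z' h R' ih =>
      have h1 := key2 _ _ h
      have h2 : |ℓ' x' - ℓ' z'| ≤ |ℓ' x' - ℓ' y'| + |ℓ' y' - ℓ' z'| := abs_sub_le _ _ _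
      rw [SimpleGraph.Walk.length_cons]
      push_cast
      linarith
  -- every vertex reaches v_*
  have key4 : ∀ (N : ℕ) (a : α), (ℓ a - ms).toNat ≤ N → Q.Reachable (some a) none := by
    have hToNone : ∀ (a : α) (i : ℕ), c i = a →
        ¬(∃ j, i < j ∧ ℓ (c j) = ℓ (c i) - 1) → Q.Adj (some a) none := by
      intro a i hci hni
      rw [hQdef, SimpleGraph.fromRel_adj]
      refine ⟨by simp, Or.inl ⟨i, by rw [hci], by rw [dif_neg hni]⟩⟩
    intro N
    induction N with
    | zero =>
      intro a ha
      obtain ⟨i, _, hci⟩ := hsurj a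
      have hni : ¬(∃ j, i < j ∧ ℓ (c j) = ℓ (c i) - 1) := by
        rintro ⟨j, _, hj2⟩
        have := hms_le (c j)
        have := hms_le a
        rw [hci] at hj2
        omega
      exact (hToNone a i hci hni).reachable
    | succ N ih =>
      intro a ha
      obtain ⟨i, _, hci⟩ := hsurj a
      by_cases h : ∃ j, i < j ∧ ℓ (c j) = ℓ (c i) - 1
      · set b := c (sInf {j | i < j ∧ ℓ (c j) = ℓ (c i) - 1}) with hb
        have hlb : ℓ b = ℓ a - 1 := by
          have h2 : ℓ (c (sInf {j | i < j ∧ ℓ (c j) = ℓ (c i) - 1})) = ℓ (c i) - 1 :=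
            (Nat.sInf_mem h).2
          rw [hb, h2, hci]
        have hadjab : Q.Adj (some a) (some b) := by
          rw [hQdef, SimpleGraph.fromRel_adj]
          constructor
          · intro hcon
            rw [Option.some_inj] at hcon
            rw [hcon] at hlb
            omega
          · exact Or.inl ⟨i, by rw [hci], by rw [dif_pos h, hb]⟩
        have hrb : Q.Reachable (some b) none := by
          apply ih
          have := hms_le b
          omega
        exact hadjab.reachable.trans hrb
      · exact (hToNone a i hci h).reachable
  -- the walk lemma: a Q-walk avoiding v_* shadows a G-walk with controlled labels
  have key6 : ∀ (x y : Option α) (P : Q.Walk x y), none ∉ P.support →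
      ∀ (a b : α), x = some a → y = some b →
      ∃ W : G.Walk a b, ∀ t ∈ W.support, ∃ z : α, some z ∈ P.support ∧ ℓ z ≤ ℓ t := by
    intro x y P
    induction P with
    | @nil x' =>
      intro _ a b ha hb
      rw [ha] at hb
      obtain rfl : a = b := Option.some_injective _ hb
      refine ⟨SimpleGraph.Walk.nil, ?_⟩
      intro t ht
      rw [SimpleGraph.Walk.support_nil, List.mem_singleton] at ht
      subst ht
      exact ⟨t, by rw [SimpleGraph.Walk.support_nil, ha]; simp, le_rfl⟩
    | @cons x' y' z' h P' ih =>
      intro hnone a b ha hb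
      have hnone' : none ∉ P'.support := by
        intro hc
        exact hnone (by rw [SimpleGraph.Walk.support_cons]; exact List.mem_cons_of_mem _ hc)
      obtain ⟨a', ha'⟩ : ∃ a', y' = some a' := by
        cases y' with
        | none => exact absurd (by
            rw [SimpleGraph.Walk.support_cons]
            exact List.mem_cons_of_mem _ P'.start_mem_support) hnone
        | some a' => exact ⟨a', rfl⟩
      obtain ⟨W', hW'⟩ := ih hnone' a' b ha' hb
      have hmem_a : some a ∈ (SimpleGraph.Walk.cons h P').support := by
        rw [SimpleGraph.Walk.support_cons, ha]; exact List.mem_cons_self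
      have hmem_a' : some a' ∈ (SimpleGraph.Walk.cons h P').support := by
        rw [SimpleGraph.Walk.support_cons, ← ha']
        exact List.mem_cons_of_mem _ P'.start_mem_support
      -- build the bridging tree walk from a to a'
      have hbridge : ∃ W1 : G.Walk a a', ∀ t ∈ W1.support, ℓ a ≤ ℓ t ∨ ℓ a' ≤ ℓ t := by
        rw [hQdef, SimpleGraph.fromRel_adj, ha, ha'] at h
        rcases h.2 with hr | hr
        · obtain ⟨i, hxi, hyi⟩ := hr
          obtain rfl : a = c i := Option.some_injective _ hxi
          by_cases hcond : ∃ j, i < j ∧ ℓ (c j) = ℓ (c i) - 1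
          · rw [dif_pos hcond] at hyi
            set jj := sInf {j | i < j ∧ ℓ (c j) = ℓ (c i) - 1} with hjj
            obtain rfl : a' = c jj := Option.some_injective _ hyi
            have hij : i < jj := (Nat.sInf_mem hcond).1
            have hjl : ℓ (c jj) = ℓ (c i) - 1 := (Nat.sInf_mem hcond).2
            refine ⟨(cvsSeg hadj i (jj - i)).copy rfl (by rw [show i + (jj - i) = jj by omega]), ?_⟩
            intro t ht
            rw [SimpleGraph.Walk.support_copy] at ht
            obtain ⟨k, hk, rfl⟩ := cvsSeg_support hadj i (jj - i) t ht
            by_cases hkd : k = jj - i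
            · right; rw [hkd, show i + (jj - i) = jj by omega]
            · left; exact key_min i hcond (i + k) (by omega) (by omega)
          · rw [dif_neg hcond] at hyi
            exact absurd hyi.symm (by simp)
        · obtain ⟨i, hxi, hyi⟩ := hr
          obtain rfl : a' = c i := Option.some_injective _ hxi
          by_cases hcond : ∃ j, i < j ∧ ℓ (c j) = ℓ (c i) - 1
          · rw [dif_pos hcond] at hyi
            set jj := sInf {j | i < j ∧ ℓ (c j) = ℓ (c i) - 1} with hjj
            obtain rfl : a = c jj := Option.some_injective _ hyi
            have hij : i < jj := (Nat.sInf_mem hcond).1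
            have hjl : ℓ (c jj) = ℓ (c i) - 1 := (Nat.sInf_mem hcond).2
            refine ⟨((cvsSeg hadj i (jj - i)).copy rfl
              (by rw [show i + (jj - i) = jj by omega])).reverse, ?_⟩
            intro t ht
            rw [SimpleGraph.Walk.support_reverse, List.mem_reverse,
              SimpleGraph.Walk.support_copy] at ht
            obtain ⟨k, hk, rfl⟩ := cvsSeg_support hadj i (jj - i) t ht
            by_cases hkd : k = jj - i
            · left; rw [hkd, show i + (jj - i) = jj by omega]
            · right; exact key_min i hcond (i + k) (by omega) (by omega)
          · rw [dif_neg hcond] at hyi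
            exact absurd hyi.symm (by simp)
      obtain ⟨W1, hW1⟩ := hbridge
      refine ⟨W1.append W', ?_⟩
      intro t ht
      rw [SimpleGraph.Walk.mem_support_append_iff] at ht
      rcases ht with ht | ht
      · rcases hW1 t ht with hle | hle
        · exact ⟨a, hmem_a, hle⟩
        · exact ⟨a', hmem_a', hle⟩
      · obtain ⟨z, hz1, hz2⟩ := hW' t ht
        refine ⟨z, ?_, hz2⟩
        rw [SimpleGraph.Walk.support_cons]
        exact List.mem_cons_of_mem _ hz1
  -- now the main estimate
  obtain ⟨w, hw, hwm⟩ := Finset.exists_mem_eq_inf'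
    (⟨u, List.mem_toFinset.mpr p.start_mem_support⟩ : p.support.toFinset.Nonempty) ℓ
  have hwp : w ∈ p.support := List.mem_toFinset.mp hw
  have hreach : Q.Reachable (some u) (some v) :=
    ((key4 _ u le_rfl).trans (key4 _ v le_rfl).symm)
  obtain ⟨P, hP⟩ := hreach.exists_walk_length_eq_dist
  -- find a low-label vertex on P
  have hlow : ∃ z ∈ P.support, ℓ' z ≤ ℓ w := by
    by_cases h0 : none ∈ P.support
    · refine ⟨none, h0, ?_⟩
      have : ℓ' (none : Option α) = ms - 1 := rfl
      rw [this]
      have := hms_le w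
      omega
    · obtain ⟨W, hW⟩ := key6 _ _ P h0 u v rfl rfl
      have hwW : w ∈ W.support := cvsTreeSep hG.2 p hp W hwp
      obtain ⟨z, hz1, hz2⟩ := hW w hwW
      exact ⟨some z, hz1, by rw [hℓ's]; exact hz2⟩
  obtain ⟨z, hz, hzw⟩ := hlow
  have hlen : (P.takeUntil z hz).length + (P.dropUntil z hz).length = P.length := by
    rw [← SimpleGraph.Walk.length_append, SimpleGraph.Walk.take_spec]
  have h1 := key3 _ _ (P.takeUntil z hz)
  have h2 := key3 _ _ (P.dropUntil z hz)
  have ha1 : ℓ u - ℓ' z ≤ |ℓ' (some u) - ℓ' z| := by rw [hℓ's]; exact le_abs_self _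
  have ha2 : ℓ v - ℓ' z ≤ |ℓ' z - ℓ' (some v)| := by
    rw [hℓ's, abs_sub_comm]; exact le_abs_self _
  rw [hwm, ← hP]
  have hc : ((P.takeUntil z hz).length : ℤ) + ((P.dropUntil z hz).length : ℤ)
      = (P.length : ℤ) := by exact_mod_cast congrArg Nat.cast hlen
  linarith
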